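/- In a cubical set with connections, if θ = Γ_t^β(τ) for some τ ∈ K_{n-1}, t ∈ [n-1], β ∈ {+,−}, and we set h = (-1)^{t+1} Γ_t^β − 2 Σ_{j=1}^{t-1} (-1)^j Γ_j^β (extended linearly to chains), then ∂_{n+1} h(θ) + h(∂_n θ) = β θ in the non-degenerate chain complex, where β denotes the sign ±1. -/

import Mathlib

structure PrecubicalConn where
  K : ℕ → Type*
  face : Bool → ∀ n : ℕ, ℕ → K (n + 1) → K n
  degen : ∀ n : ℕ, ℕ → K n → K (n + 1)
  conn : Bool → ∀ n : ℕ, ℕ → K n → K (n + 1)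

/-- The axioms of a cubical set with connections (`true` stands for `+`, `false` for `-`;
indices are 1-based with explicit range guards). -/
structure CubicalConnAxioms (P : PrecubicalConn) : Prop where
  face_face : ∀ (α β : Bool) (n i j : ℕ) (σ : P.K (n + 2)), 1 ≤ i → i < j → j ≤ n + 2 →
    P.face α n i (P.face β (n + 1) j σ) = P.face β n (j - 1) (P.face α (n + 1) i σ)
  degen_degen : ∀ (n i j : ℕ) (σ : P.K n), 1 ≤ i → i ≤ j → j ≤ n + 1 →
    P.degen (n + 1) i (P.degen n j σ) = P.degen (n + 1) (j + 1) (P.degen n i σ)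
  face_degen_lt : ∀ (α : Bool) (n i j : ℕ) (σ : P.K (n + 1)), 1 ≤ i → i < j → j ≤ n + 2 →
    P.face α (n + 1) i (P.degen (n + 1) j σ) = P.degen n (j - 1) (P.face α n i σ)
  face_degen_gt : ∀ (α : Bool) (n i j : ℕ) (σ : P.K (n + 1)), 1 ≤ j → j < i → i ≤ n + 2 →
    P.face α (n + 1) i (P.degen (n + 1) j σ) = P.degen n j (P.face α n (i - 1) σ)
  face_degen_eq : ∀ (α : Bool) (n i : ℕ) (σ : P.K n), 1 ≤ i → i ≤ n + 1 →
    P.face α n i (P.degen n i σ) = σ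
  conn_conn : ∀ (α β : Bool) (n i j : ℕ) (σ : P.K n), 1 ≤ i → i ≤ j → j ≤ n →
    P.conn α (n + 1) i (P.conn β n j σ) = P.conn β (n + 1) (j + 1) (P.conn α n i σ)
  conn_degen_lt : ∀ (α : Bool) (n i j : ℕ) (σ : P.K n), 1 ≤ i → i < j → j ≤ n + 1 →
    P.conn α (n + 1) i (P.degen n j σ) = P.degen (n + 1) (j + 1) (P.conn α n i σ)
  conn_degen_gt : ∀ (α : Bool) (n i j : ℕ) (σ : P.K n), 1 ≤ j → j < i → i ≤ n + 1 →
    P.conn α (n + 1) i (P.degen n j σ) = P.degen (n + 1) j (P.conn α n (i - 1) σ)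
  conn_degen_eq : ∀ (α : Bool) (n i : ℕ) (σ : P.K n), 1 ≤ i → i ≤ n + 1 →
    P.conn α (n + 1) i (P.degen n i σ) = P.degen (n + 1) (i + 1) (P.degen n i σ)
  face_conn_lt : ∀ (α β : Bool) (n i j : ℕ) (σ : P.K (n + 1)), 1 ≤ i → i < j → j ≤ n + 1 →
    P.face α (n + 1) i (P.conn β (n + 1) j σ) = P.conn β n (j - 1) (P.face α n i σ)
  face_conn_gt : ∀ (α β : Bool) (n i j : ℕ) (σ : P.K (n + 1)), 1 ≤ j → j + 1 < i → i ≤ n + 2 →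
    P.face α (n + 1) i (P.conn β (n + 1) j σ) = P.conn β n j (P.face α n (i - 1) σ)
  face_conn_self : ∀ (β : Bool) (n i j : ℕ) (σ : P.K n), 1 ≤ j → j ≤ n → (i = j ∨ i = j + 1) →
    P.face β n i (P.conn β n j σ) = σ
  face_conn_opp : ∀ (α β : Bool) (n i j : ℕ) (σ : P.K (n + 1)), 1 ≤ j → j ≤ n + 1 →
    (i = j ∨ i = j + 1) → α ≠ β →
    P.face α (n + 1) i (P.conn β (n + 1) j σ) = P.degen n j (P.face α n j σ)

/-- A cube is degenerate if it is of the form `ε_i f_i^+ σ`. -/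
def PrecubicalConn.Degenerate (P : PrecubicalConn) : ∀ {n : ℕ}, P.K n → Prop :=
  fun {n} σ =>
    match n, σ with
    | 0, _ => False
    | m + 1, σ => ∃ i : ℕ, 1 ≤ i ∧ i ≤ m + 1 ∧ σ = P.degen m i (P.face true m i σ)

/-- A cube is a connection if it lies in the image of some `Γ_i^β`. -/
def PrecubicalConn.IsConn (P : PrecubicalConn) : ∀ {n : ℕ}, P.K n → Prop :=
  fun {n} σ =>
    match n, σ with
    | 0, _ => False
    | m + 1, σ => ∃ (β : Bool) (i : ℕ) (τ : P.K m), 1 ≤ i ∧ i ≤ m ∧ σ = P.conn β m i τ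

/-- The linear extension of the face map `f_i^α` to the free `R`-module on the cubes. -/
noncomputable def Fmap (P : PrecubicalConn) (R : Type*) [CommRing R] (α : Bool) (n i : ℕ) :
    (P.K (n + 1) →₀ R) →ₗ[R] (P.K n →₀ R) :=
  Finsupp.lmapDomain R R (P.face α n i)

/-- The linear extension of the connection map `Γ_i^β` to the free `R`-module on the cubes. -/
noncomputable def Gmap (P : PrecubicalConn) (R : Type*) [CommRing R] (β : Bool) (n i : ℕ) :
    (P.K n →₀ R) →ₗ[R] (P.K (n + 1) →₀ R) :=
  Finsupp.lmapDomain R R (P.conn β n i)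

/-- The cubical boundary operator `∂ σ = ∑_{i=1}^{n+1} (-1)^i (f_i^- σ - f_i^+ σ)`. -/
noncomputable def bdry (P : PrecubicalConn) (R : Type*) [CommRing R] (n : ℕ) :
    (P.K (n + 1) →₀ R) →ₗ[R] (P.K n →₀ R) :=
  ∑ i ∈ Finset.Icc 1 (n + 1), ((-1 : R) ^ i) • (Fmap P R false n i - Fmap P R true n i)

/-- The submodule generated by the degenerate cubes. -/
noncomputable def degenSub (P : PrecubicalConn) (R : Type*) [CommRing R] (n : ℕ) :
    Submodule R (P.K n →₀ R) :=
  Submodule.span R {x | ∃ σ : P.K n, P.Degenerate σ ∧ x = Finsupp.single σ 1}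

/-- The submodule generated by the connection cubes. -/
noncomputable def connSub (P : PrecubicalConn) (R : Type*) [CommRing R] (n : ℕ) :
    Submodule R (P.K n →₀ R) :=
  Submodule.span R {x | ∃ σ : P.K n, P.IsConn σ ∧ x = Finsupp.single σ 1}

/-- The sign `±1` associated to `β ∈ {+,-}`. -/
def sgn (R : Type*) [CommRing R] (β : Bool) : R := if β then 1 else -1

/-- The operator `h = (-1)^{t+1} Γ_t^β - 2 ∑_{j=1}^{t-1} (-1)^j Γ_j^β`. -/
noncomputable def hMap (P : PrecubicalConn) (R : Type*) [CommRing R] (β : Bool) (t m : ℕ) :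
    (P.K m →₀ R) →ₗ[R] (P.K (m + 1) →₀ R) :=
  ((-1 : R) ^ (t + 1)) • Gmap P R β m t
    - (2 : R) • ∑ j ∈ Finset.Icc 1 (t - 1), ((-1 : R) ^ j) • Gmap P R β m j


section Aux
variable (P : PrecubicalConn) (R : Type*) [CommRing R]

lemma Fmap_single (α : Bool) (k i : ℕ) (σ : P.K (k+1)) :
    Fmap P R α k i (Finsupp.single σ 1) = Finsupp.single (P.face α k i σ) 1 := by
  simp [Fmap, Finsupp.lmapDomain_apply, Finsupp.mapDomain_single]

lemma Gmap_single (β : Bool) (k i : ℕ) (σ : P.K k) :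
    Gmap P R β k i (Finsupp.single σ 1) = Finsupp.single (P.conn β k i σ) 1 := by
  simp [Gmap, Finsupp.lmapDomain_apply, Finsupp.mapDomain_single]

lemma bdry_single (k : ℕ) (σ : P.K (k+1)) :
    bdry P R k (Finsupp.single σ 1)
      = ∑ i ∈ Finset.Icc 1 (k+1), ((-1:R)^i) •
          (Finsupp.single (P.face false k i σ) 1 - Finsupp.single (P.face true k i σ) 1) := by
  simp [bdry, LinearMap.sum_apply, Fmap_single]

lemma hMap_apply (β : Bool) (t k : ℕ) (x : P.K k →₀ R) :
    hMap P R β t k x = ((-1:R)^(t+1)) • Gmap P R β k t x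
      - (2:R) • ∑ j ∈ Finset.Icc 1 (t-1), ((-1:R)^j) • Gmap P R β k j x := by
  simp [hMap, LinearMap.sum_apply]

lemma degen_mem (hP : CubicalConnAxioms P) (k i : ℕ) (h1 : 1 ≤ i) (h2 : i ≤ k+1)
    (σ : P.K k) (c : R) :
    Finsupp.single (P.degen k i σ) c ∈ degenSub P R (k+1) := by
  have h : Finsupp.single (P.degen k i σ) c = c • Finsupp.single (P.degen k i σ) (1:R) := by
    simp [Finsupp.smul_single]
  rw [h]
  refine Submodule.smul_mem _ _ (Submodule.subset_span ?_)
  exact ⟨_, ⟨i, h1, h2, by rw [hP.face_degen_eq _ _ _ _ h1 h2]⟩, rfl⟩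

end Aux

section Aux2
variable (P : PrecubicalConn) (R : Type*) [CommRing R]

lemma bdry_conn_single (hP : CubicalConnAxioms P) (β : Bool) (k j : ℕ)
    (hj1 : 1 ≤ j) (hj2 : j ≤ k+1) (σ : P.K (k+1)) :
    bdry P R (k+1) (Finsupp.single (P.conn β (k+1) j σ) 1)
      = (∑ i ∈ Finset.Icc 1 (j-1), ((-1:R)^i) •
          (Finsupp.single (P.conn β k (j-1) (P.face false k i σ)) 1
            - Finsupp.single (P.conn β k (j-1) (P.face true k i σ)) 1))
        - ∑ i ∈ Finset.Icc (j+1) (k+1), ((-1:R)^i) •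
          (Finsupp.single (P.conn β k j (P.face false k i σ)) 1
            - Finsupp.single (P.conn β k j (P.face true k i σ)) 1) := by
  rw [bdry_single]
  set g : ℕ → (P.K (k+1) →₀ R) := fun i => ((-1:R)^i) •
      (Finsupp.single (P.face false (k+1) i (P.conn β (k+1) j σ)) 1
        - Finsupp.single (P.face true (k+1) i (P.conn β (k+1) j σ)) 1) with hg
  have hsplit : ∑ i ∈ Finset.Icc 1 (k+2), g i
      = (∑ i ∈ Finset.Ioc 0 (j-1), g i) + (∑ i ∈ Finset.Ioc (j-1) (j+1), g i)
        + ∑ i ∈ Finset.Ioc (j+1) (k+2), g i := by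
    have e1 : ∑ i ∈ Finset.Ioc 0 (j+1), g i
        = (∑ i ∈ Finset.Ioc 0 (j-1), g i) + ∑ i ∈ Finset.Ioc (j-1) (j+1), g i :=
      (Finset.sum_Ioc_consecutive g (by omega) (by omega)).symm
    have e2 : ∑ i ∈ Finset.Ioc 0 (k+2), g i
        = (∑ i ∈ Finset.Ioc 0 (j+1), g i) + ∑ i ∈ Finset.Ioc (j+1) (k+2), g i :=
      (Finset.sum_Ioc_consecutive g (by omega) (by omega)).symm
    rw [(show Finset.Icc 1 (k+2) = Finset.Ioc 0 (k+2) from Finset.Icc_add_one_left_eq_Ioc 0 _), e2, e1]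
  -- the middle two terms cancel
  have hface : ∀ α : Bool, P.face α (k+1) (j+1) (P.conn β (k+1) j σ)
      = P.face α (k+1) j (P.conn β (k+1) j σ) := by
    intro α
    by_cases hα : α = β
    · subst hα
      rw [hP.face_conn_self α (k+1) (j+1) j σ hj1 hj2 (Or.inr rfl),
        hP.face_conn_self α (k+1) j j σ hj1 hj2 (Or.inl rfl)]
    · rw [hP.face_conn_opp α β k (j+1) j σ hj1 hj2 (Or.inr rfl) hα,
        hP.face_conn_opp α β k j j σ hj1 hj2 (Or.inl rfl) hα]
  have hmid : ∑ i ∈ Finset.Ioc (j-1) (j+1), g i = 0 := by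
    have h1 : Finset.Ioc (j-1) (j+1) = {j, j+1} := by
      ext x; simp only [Finset.mem_Ioc, Finset.mem_insert, Finset.mem_singleton]; omega
    rw [h1, Finset.sum_pair (by omega : j ≠ j+1)]
    rw [hg]
    simp only [hface, pow_succ]
    module
  have hleft : ∑ i ∈ Finset.Ioc 0 (j-1), g i
      = ∑ i ∈ Finset.Icc 1 (j-1), ((-1:R)^i) •
          (Finsupp.single (P.conn β k (j-1) (P.face false k i σ)) 1
            - Finsupp.single (P.conn β k (j-1) (P.face true k i σ)) 1) := by
    rw [← Finset.Icc_add_one_left_eq_Ioc]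
    refine Finset.sum_congr rfl fun i hi => ?_
    simp only [Finset.mem_Icc] at hi
    simp only [hg]
    rw [hP.face_conn_lt false β k i j σ hi.1 (by omega) hj2,
      hP.face_conn_lt true β k i j σ hi.1 (by omega) hj2]
  have hright : ∑ i ∈ Finset.Ioc (j+1) (k+2), g i
      = - ∑ i ∈ Finset.Icc (j+1) (k+1), ((-1:R)^i) •
          (Finsupp.single (P.conn β k j (P.face false k i σ)) 1
            - Finsupp.single (P.conn β k j (P.face true k i σ)) 1) := by
    have hmap : Finset.Ioc (j+1) (k+2) = (Finset.Ioc j (k+1)).map (addRightEmbedding 1) := by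
      rw [Finset.map_add_right_Ioc]
    rw [hmap, Finset.sum_map, ← Finset.sum_neg_distrib]
    rw [← Finset.Icc_add_one_left_eq_Ioc]
    refine Finset.sum_congr rfl fun i hi => ?_
    simp only [Finset.mem_Icc] at hi
    simp only [hg, addRightEmbedding_apply]
    rw [hP.face_conn_gt false β k (i+1) j σ hj1 (by omega) (by omega),
      hP.face_conn_gt true β k (i+1) j σ hj1 (by omega) (by omega)]
    simp only [Nat.add_sub_cancel, pow_succ]
    module
  rw [hsplit, hmid, hleft, hright]
  abel

end Aux2

section Key
variable (R : Type*) [CommRing R] {M : Type*} [AddCommGroup M] [Module R M]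

lemma key_telescope (X : ℕ → ℕ → M) (r : ℕ) :
    ((-1:R)^r) • (∑ i ∈ Finset.Icc 1 r, ((-1:R)^i) • (X r i + X r i))
      = (2:R) • ∑ j ∈ Finset.Icc 1 r, ((-1:R)^j) •
          ((∑ i ∈ Finset.Icc 1 (j-1), ((-1:R)^i) • (X (j-1) i + X j i))
            + ((-1:R)^j) • X j j) := by
  induction r with
  | zero => simp
  | succ r ih =>
    rw [Finset.sum_Icc_succ_top (by omega : 1 ≤ r+1), Finset.sum_Icc_succ_top (by omega : 1 ≤ r+1)]
    simp only [Nat.add_sub_cancel]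
    have expand : ∀ Z W : ℕ → M, ∑ i ∈ Finset.Icc 1 r, ((-1:R)^i) • (Z i + W i)
        = (∑ i ∈ Finset.Icc 1 r, ((-1:R)^i) • Z i)
          + ∑ i ∈ Finset.Icc 1 r, ((-1:R)^i) • W i := by
      intro Z W
      rw [← Finset.sum_add_distrib]
      exact Finset.sum_congr rfl fun i _ => smul_add _ _ _
    rw [expand (X (r+1)) (X (r+1)), expand (X r) (X (r+1)), smul_add ((2:R))]
    have ih' : ((-1:R)^r) • ((∑ i ∈ Finset.Icc 1 r, ((-1:R)^i) • X r i)
        + ∑ i ∈ Finset.Icc 1 r, ((-1:R)^i) • X r i)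
        = (2:R) • ∑ j ∈ Finset.Icc 1 r, ((-1:R)^j) •
          ((∑ i ∈ Finset.Icc 1 (j-1), ((-1:R)^i) • (X (j-1) i + X j i))
            + ((-1:R)^j) • X j j) := by
      rw [← expand (X r) (X r)]; exact ih
    rw [← ih']
    set A := ∑ i ∈ Finset.Icc 1 r, ((-1:R)^i) • X r i
    set B := ∑ i ∈ Finset.Icc 1 r, ((-1:R)^i) • X (r+1) i
    set c := X (r+1) (r+1)
    rcases neg_one_pow_eq_or R r with ha | ha <;> rw [pow_succ, ha] <;> module

end Key

set_option maxHeartbeats 2000000 in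
/-- Lemma 3.5: for a connection cube `θ = Γ_t^β τ` and
`h = (-1)^{t+1} Γ_t^β - 2 ∑_{j=1}^{t-1} (-1)^j Γ_j^β`, in the non-degenerate chain
complex one has `∂ h(θ) + h(∂ θ) = β θ`. -/
theorem hMap_chain_identity (P : PrecubicalConn) (hP : CubicalConnAxioms P)
    (R : Type*) [CommRing R] (n t : ℕ) (β : Bool) (τ : P.K (n + 1))
    (ht1 : 1 ≤ t) (ht2 : t ≤ n + 1) (θ : P.K (n + 2)) (hθ : θ = P.conn β (n + 1) t τ) :
    (bdry P R (n + 2) (hMap P R β t (n + 2) (Finsupp.single θ 1))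
        + hMap P R β t (n + 1) (bdry P R (n + 1) (Finsupp.single θ 1)))
      - sgn R β • Finsupp.single θ 1
      ∈ degenSub P R (n + 2) := by
  obtain ⟨t', rfl⟩ : ∃ t', t = t' + 1 := ⟨t - 1, by omega⟩
  set Y : ℕ → ℕ → (P.K (n+2) →₀ R) := fun a i =>
    Finsupp.single (P.conn β (n+1) a (P.face false (n+1) i θ)) 1
      - Finsupp.single (P.conn β (n+1) a (P.face true (n+1) i θ)) 1 with hY
  have part1 : bdry P R (n+2) (hMap P R β (t'+1) (n+2) (Finsupp.single θ 1))
      = (-1:R)^(t'+1+1) • ((∑ i ∈ Finset.Icc 1 t', ((-1:R)^i) • Y t' i)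
          - ∑ i ∈ Finset.Icc (t'+1+1) (n+2), ((-1:R)^i) • Y (t'+1) i)
        - (2:R) • ∑ j ∈ Finset.Icc 1 t', ((-1:R)^j) •
            ((∑ i ∈ Finset.Icc 1 (j-1), ((-1:R)^i) • Y (j-1) i)
              - ∑ i ∈ Finset.Icc (j+1) (n+2), ((-1:R)^i) • Y j i) := by
    rw [hMap_apply, Gmap_single, map_sub, map_smul, map_smul, map_sum]
    rw [bdry_conn_single P R hP β (n+1) (t'+1) (by omega) (by omega) θ]
    simp only [Nat.add_sub_cancel]
    congr 2
    refine Finset.sum_congr rfl fun j hj => ?_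
    simp only [Finset.mem_Icc] at hj
    rw [map_smul, Gmap_single, bdry_conn_single P R hP β (n+1) j (by omega) (by omega) θ]
  have part2 : hMap P R β (t'+1) (n+1) (bdry P R (n+1) (Finsupp.single θ 1))
      = (-1:R)^(t'+1+1) • (∑ i ∈ Finset.Icc 1 (n+2), ((-1:R)^i) • Y (t'+1) i)
        - (2:R) • ∑ j ∈ Finset.Icc 1 t', ((-1:R)^j) •
            ∑ i ∈ Finset.Icc 1 (n+2), ((-1:R)^i) • Y j i := by
    rw [bdry_single, hMap_apply]
    simp only [Nat.add_sub_cancel]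
    congr 2
    · rw [map_sum]
      refine Finset.sum_congr rfl fun i _ => ?_
      rw [map_smul, map_sub, Gmap_single, Gmap_single]
    · refine Finset.sum_congr rfl fun j _ => ?_
      congr 1
      rw [map_sum]
      refine Finset.sum_congr rfl fun i _ => ?_
      rw [map_smul, map_sub, Gmap_single, Gmap_single]
  have hsum : ∀ a, a ≤ n+1 → (∑ i ∈ Finset.Icc 1 (n+2), ((-1:R)^i) • Y a i)
      - (∑ i ∈ Finset.Icc (a+1) (n+2), ((-1:R)^i) • Y a i)
      = ∑ i ∈ Finset.Icc 1 a, ((-1:R)^i) • Y a i := by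
    intro a ha
    have h := Finset.sum_Ioc_consecutive (fun i => ((-1:R)^i) • Y a i)
      (Nat.zero_le a) (by omega : a ≤ n+2)
    rw [(show Finset.Icc 1 (n+2) = Finset.Ioc 0 (n+2) from Finset.Icc_add_one_left_eq_Ioc 0 _), (show Finset.Icc 1 a = Finset.Ioc 0 a from Finset.Icc_add_one_left_eq_Ioc 0 _), Finset.Icc_add_one_left_eq_Ioc, ← h]
    abel
  have step1 : ∀ a', a' + 1 ≤ n+1 →
      ((∑ i ∈ Finset.Icc 1 a', ((-1:R)^i) • Y a' i)
        - ∑ i ∈ Finset.Icc (a'+1+1) (n+2), ((-1:R)^i) • Y (a'+1) i)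
      + ∑ i ∈ Finset.Icc 1 (n+2), ((-1:R)^i) • Y (a'+1) i
      = (∑ i ∈ Finset.Icc 1 a', ((-1:R)^i) • (Y a' i + Y (a'+1) i))
        + ((-1:R)^(a'+1)) • Y (a'+1) (a'+1) := by
    intro a' ha
    have h2 := hsum (a'+1) ha
    calc ((∑ i ∈ Finset.Icc 1 a', ((-1:R)^i) • Y a' i)
          - ∑ i ∈ Finset.Icc (a'+1+1) (n+2), ((-1:R)^i) • Y (a'+1) i)
        + ∑ i ∈ Finset.Icc 1 (n+2), ((-1:R)^i) • Y (a'+1) i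
        = (∑ i ∈ Finset.Icc 1 a', ((-1:R)^i) • Y a' i)
          + ((∑ i ∈ Finset.Icc 1 (n+2), ((-1:R)^i) • Y (a'+1) i)
            - ∑ i ∈ Finset.Icc (a'+1+1) (n+2), ((-1:R)^i) • Y (a'+1) i) := by abel
      _ = (∑ i ∈ Finset.Icc 1 a', ((-1:R)^i) • Y a' i)
          + ∑ i ∈ Finset.Icc 1 (a'+1), ((-1:R)^i) • Y (a'+1) i := by rw [h2]
      _ = (∑ i ∈ Finset.Icc 1 a', ((-1:R)^i) • Y a' i)
          + ((∑ i ∈ Finset.Icc 1 a', ((-1:R)^i) • Y (a'+1) i)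
            + ((-1:R)^(a'+1)) • Y (a'+1) (a'+1)) := by
            rw [Finset.sum_Icc_succ_top (by omega : 1 ≤ a'+1)]
      _ = (∑ i ∈ Finset.Icc 1 a', ((-1:R)^i) • (Y a' i + Y (a'+1) i))
          + ((-1:R)^(a'+1)) • Y (a'+1) (a'+1) := by
            rw [← add_assoc, ← Finset.sum_add_distrib]
            congr 1
            exact Finset.sum_congr rfl fun i _ => (smul_add _ _ _).symm
  have combine : bdry P R (n+2) (hMap P R β (t'+1) (n+2) (Finsupp.single θ 1))
      + hMap P R β (t'+1) (n+1) (bdry P R (n+1) (Finsupp.single θ 1))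
      = (-1:R)^(t'+1+1) • ((∑ i ∈ Finset.Icc 1 t', ((-1:R)^i) • (Y t' i + Y (t'+1) i))
          + ((-1:R)^(t'+1)) • Y (t'+1) (t'+1))
        - (2:R) • ∑ j ∈ Finset.Icc 1 t', ((-1:R)^j) •
            ((∑ i ∈ Finset.Icc 1 (j-1), ((-1:R)^i) • (Y (j-1) i + Y j i))
              + ((-1:R)^j) • Y j j) := by
    rw [part1, part2]
    have rearr : ∀ A B C D : P.K (n+2) →₀ R, (A - B) + (C - D) = (A + C) - (B + D) := by
      intro A B C D; abel
    rw [rearr]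
    congr 1
    · rw [← smul_add, step1 t' (by omega)]
    · rw [← smul_add, ← Finset.sum_add_distrib]
      congr 1
      refine Finset.sum_congr rfl fun j hj => ?_
      simp only [Finset.mem_Icc] at hj
      obtain ⟨j', rfl⟩ : ∃ j', j = j' + 1 := ⟨j - 1, by omega⟩
      rw [← smul_add]
      simp only [Nat.add_sub_cancel]
      rw [step1 j' (by omega)]
  set X : ℕ → ℕ → (P.K (n+2) →₀ R) := fun a i =>
    Finsupp.single (P.conn β (n+1) (t'+1) (P.conn β n a (P.face false n i τ))) 1
      - Finsupp.single (P.conn β (n+1) (t'+1) (P.conn β n a (P.face true n i τ))) 1 with hX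
  have faceθ : ∀ (α : Bool) i, 1 ≤ i → i ≤ t' →
      P.face α (n+1) i θ = P.conn β n t' (P.face α n i τ) := by
    intro α i h1 h2
    rw [hθ]
    have h := hP.face_conn_lt α β n i (t'+1) τ h1 (by omega) (by omega)
    simpa using h
  have hY1 : ∀ a i, 1 ≤ a → a ≤ t' → 1 ≤ i → i ≤ t' → Y a i = X a i := by
    intro a i ha1 ha2 hi1 hi2
    simp only [hY, hX, faceθ false i hi1 hi2, faceθ true i hi1 hi2]
    rw [hP.conn_conn β β n a t' (P.face false n i τ) ha1 ha2 (by omega : t' ≤ n),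
      hP.conn_conn β β n a t' (P.face true n i τ) ha1 ha2 (by omega : t' ≤ n)]
  have hY2 : ∀ i, 1 ≤ i → i ≤ t' → Y (t'+1) i = X t' i := by
    intro i h1 h2
    simp only [hY, hX, faceθ false i h1 h2, faceθ true i h1 h2]
  have keyX := key_telescope R X t'
  have sum_top : ∑ i ∈ Finset.Icc 1 t', ((-1:R)^i) • (Y t' i + Y (t'+1) i)
      = ∑ i ∈ Finset.Icc 1 t', ((-1:R)^i) • (X t' i + X t' i) := by
    refine Finset.sum_congr rfl fun i hi => ?_
    simp only [Finset.mem_Icc] at hi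
    rw [hY1 t' i (by omega) le_rfl hi.1 hi.2, hY2 i hi.1 hi.2]
  have sum_bot : ∑ j ∈ Finset.Icc 1 t', ((-1:R)^j) •
        ((∑ i ∈ Finset.Icc 1 (j-1), ((-1:R)^i) • (Y (j-1) i + Y j i))
          + ((-1:R)^j) • Y j j)
      = ∑ j ∈ Finset.Icc 1 t', ((-1:R)^j) •
        ((∑ i ∈ Finset.Icc 1 (j-1), ((-1:R)^i) • (X (j-1) i + X j i))
          + ((-1:R)^j) • X j j) := by
    refine Finset.sum_congr rfl fun j hj => ?_
    simp only [Finset.mem_Icc] at hj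
    congr 1
    congr 1
    · refine Finset.sum_congr rfl fun i hi => ?_
      simp only [Finset.mem_Icc] at hi
      rw [hY1 (j-1) i (by omega) (by omega) hi.1 (by omega),
        hY1 j i (by omega) hj.2 hi.1 (by omega)]
    · rw [hY1 j j hj.1 hj.2 hj.1 hj.2]
  have final : (bdry P R (n+2) (hMap P R β (t'+1) (n+2) (Finsupp.single θ 1))
        + hMap P R β (t'+1) (n+1) (bdry P R (n+1) (Finsupp.single θ 1)))
      - sgn R β • Finsupp.single θ 1
      = - Y (t'+1) (t'+1) - sgn R β • Finsupp.single θ 1 := by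
    rw [combine, sum_top, sum_bot, smul_add, ← keyX]
    have hpow : ((-1:R)^(t'+1+1)) = ((-1:R)^t') := by
      rw [pow_succ, pow_succ]; ring
    rw [hpow]
    have hpow2 : ((-1:R)^t') • (((-1:R)^(t'+1)) • Y (t'+1) (t'+1)) = - Y (t'+1) (t'+1) := by
      rw [smul_smul, ← pow_add]
      have : ((-1:R)^(t' + (t'+1))) = -1 := Odd.neg_one_pow ⟨t', by ring⟩
      rw [this, neg_one_smul]
    rw [hpow2]
    abel
  rw [final]
  simp only [hY]
  cases β with
  | true =>
    rw [hθ, hP.face_conn_self true (n+1) (t'+1) (t'+1) τ (by omega) (by omega) (Or.inl rfl),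
      hP.face_conn_opp false true n (t'+1) (t'+1) τ (by omega) (by omega) (Or.inl rfl)
        (by simp),
      hP.conn_degen_eq true n (t'+1) (P.face false n (t'+1) τ) (by omega) (by omega)]
    have hmem := Submodule.neg_mem _ (degen_mem P R hP (n+1) (t'+1+1) (by omega) (by omega)
      (P.degen n (t'+1) (P.face false n (t'+1) τ)) (1:R))
    convert hmem using 1
    simp only [sgn, if_true]
    module
  | false =>
    rw [hθ, hP.face_conn_self false (n+1) (t'+1) (t'+1) τ (by omega) (by omega) (Or.inl rfl),
      hP.face_conn_opp true false n (t'+1) (t'+1) τ (by omega) (by omega) (Or.inl rfl)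
        (by simp),
      hP.conn_degen_eq false n (t'+1) (P.face true n (t'+1) τ) (by omega) (by omega)]
    have hmem := degen_mem P R hP (n+1) (t'+1+1) (by omega) (by omega)
      (P.degen n (t'+1) (P.face true n (t'+1) τ)) (1:R)
    convert hmem using 1
    simp only [sgn, if_false, Bool.false_eq_true]
    module
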